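/- Let X be a set and Δ: X × X → [0,∞) a semi-metric (Δ(x,y)=0 iff x=y, and Δ is symmetric). Suppose there exist α ∈ (0,1) and c ≥ 0 such that Δ(x,y) ≤ Δ(x,z) + Δ(z,y) + c·(Δ(x,z))^α·(Δ(z,y))^{1-α} for all x,y,z ∈ X (i.e., Δ is an (α,c)-interpolative metric). Then Δ is a b-metric with coefficient s = max{1 + cα, 1 + c(1-α)}, i.e., Δ(x,y) ≤ s(Δ(x,z) + Δ(z,y)) for all x,y,z ∈ X. -/
import Mathlib


theorem interpolative_is_b_metric {X : Type*} (Δ : X → X → ℝ)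
    (h_nonneg : ∀ x y, 0 ≤ Δ x y)
    (h_eq : ∀ x y, Δ x y = 0 ↔ x = y)
    (h_symm : ∀ x y, Δ x y = Δ y x)
    (α c : ℝ) (hα : 0 < α ∧ α < 1) (hc : 0 ≤ c)
    (h_interp : ∀ x y z, Δ x y ≤ Δ x z + Δ z y + c * (Δ x z) ^ α * (Δ z y) ^ (1 - α)) :
    ∀ x y z, Δ x y ≤ max (1 + c * α) (1 + c * (1 - α)) * (Δ x z + Δ z y) := by
  intro x y z
  obtain ⟨hα0, hα1⟩ := hα
  set a := Δ x z with ha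
  set b := Δ z y with hb
  have hyoung : a ^ α * b ^ (1 - α) ≤ α * a + (1 - α) * b :=
    Real.geom_mean_le_arith_mean2_weighted hα0.le (by linarith) (h_nonneg x z)
      (h_nonneg z y) (by ring)
  have h1 : Δ x y ≤ (1 + c * α) * a + (1 + c * (1 - α)) * b := by
    have := h_interp x y z
    nlinarith [h_nonneg x z, h_nonneg z y]
  have hm1 : 1 + c * α ≤ max (1 + c * α) (1 + c * (1 - α)) := le_max_left _ _
  have hm2 : 1 + c * (1 - α) ≤ max (1 + c * α) (1 + c * (1 - α)) := le_max_right _ _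
  nlinarith [h_nonneg x z, h_nonneg z y]
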